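/- For the ferromagnetic q-state Potts model (q ≥ 2, β > 0) on the subgraph induced by a finite d-dimensional cube V ⊂ ℤ^d: (i) the isolated-vertices dynamics I_SW and the isolated-vertices tiled dynamics I_D are both reversible with respect to the Potts measure π and positive semidefinite in L²(π); (ii) for every tiling B_k and every Potts configuration τ on V∖B_k, the conditional isolated-vertices tiled dynamics P_k^τ is reversible with respect to the conditional measure π(·|τ) and positive semidefinite in L²(π(·|τ)). -/

import Mathlib

open scoped BigOperators

attribute [local instance] Classical.propDecidable

/-- Vertices of the `d`-dimensional integer lattice `ℤ^d`. -/
abbrev Vtx (d : ℕ) := Fin d → ℤ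

/-- Graph (ℓ¹) distance on `ℤ^d`. -/
def latDist {d : ℕ} (u v : Vtx d) : ℕ := ∑ i, (u i - v i).natAbs

/-- Nearest-neighbor adjacency on `ℤ^d`. -/
def latAdj {d : ℕ} (u v : Vtx d) : Prop := latDist u v = 1

/-- `V` is a `d`-dimensional cube (axis-aligned box with equal sides) in `ℤ^d`. -/
def IsCube {d : ℕ} (V : Finset (Vtx d)) : Prop :=
  ∃ (x : Vtx d) (s : ℕ), ∀ y : Vtx d, y ∈ V ↔ ∀ i, x i ≤ y i ∧ y i < x i + (s : ℤ)

/-- Spin configurations on `V` with spin set `{1,…,q}`. -/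
abbrev Conf {d : ℕ} (V : Finset (Vtx d)) (q : ℕ) := {x // x ∈ V} → Fin q

/-- Unnormalized Potts weight: `exp(β · #{monochromatic edges of σ})`. -/
noncomputable def pottsWeight {d : ℕ} {V : Finset (Vtx d)} (q : ℕ) (β : ℝ)
    (σ : Conf V q) : ℝ :=
  Real.exp (β * ((∑ u : {x // x ∈ V}, ∑ v : {x // x ∈ V},
    if latAdj u.1 v.1 ∧ σ u = σ v then (1 : ℝ) else 0) / 2))

/-- The ferromagnetic `q`-state Potts measure on the subgraph of `ℤ^d` induced by `V`
(with free boundary): `π(σ) ∝ exp(β·|{e ∈ E : σ monochromatic on e}|)`. -/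
noncomputable def potts {d : ℕ} (q : ℕ) (β : ℝ) (V : Finset (Vtx d)) : Conf V q → ℝ :=
  fun σ => pottsWeight q β σ / ∑ σ' : Conf V q, pottsWeight q β σ'

/-- The set `E(σ)` of monochromatic edges of the configuration `σ`. -/
noncomputable def monoEdges {d : ℕ} {V : Finset (Vtx d)} {q : ℕ} (σ : Conf V q) :
    Finset (Sym2 {x // x ∈ V}) :=
  Finset.univ.filter fun e =>
    ∃ u v : {x // x ∈ V}, e = s(u, v) ∧ latAdj u.1 v.1 ∧ σ u = σ v

/-- The graph on `V` with edge set `A`. -/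
def graphOf {d : ℕ} {V : Finset (Vtx d)} (A : Finset (Sym2 {x // x ∈ V})) :
    SimpleGraph {x // x ∈ V} where
  Adj u v := u ≠ v ∧ s(u, v) ∈ A
  symm := by
    refine ⟨?_⟩
    intro u v h
    exact ⟨h.1.symm, by rw [Sym2.eq_swap]; exact h.2⟩
  loopless := by refine ⟨?_⟩; intro u h; exact h.1 rfl

/-- `c(A)`: the number of connected components of `(V, A)`. -/
noncomputable def compCount {d : ℕ} {V : Finset (Vtx d)}
    (A : Finset (Sym2 {x // x ∈ V})) : ℕ :=
  Nat.card (graphOf A).ConnectedComponent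

/-- The isolated vertices of `(V, A)`. -/
noncomputable def isoVerts {d : ℕ} {V : Finset (Vtx d)}
    (A : Finset (Sym2 {x // x ∈ V})) : Finset {x // x ∈ V} :=
  Finset.univ.filter fun v => ∀ e ∈ A, v ∉ e

/-- The Swendsen–Wang transition matrix:
`SW(σ,σ') = Σ_{A ⊆ E(σ)∩E(σ')} p^{|A|} (1−p)^{|E(σ)∖A|} q^{−c(A)}`, `p = 1 − e^{−β}`. -/
noncomputable def SWmat {d : ℕ} (q : ℕ) (β : ℝ) (V : Finset (Vtx d)) :
    Matrix (Conf V q) (Conf V q) ℝ :=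
  Matrix.of fun σ σ' =>
    ∑ A ∈ (monoEdges σ ∩ monoEdges σ').powerset,
      (1 - Real.exp (-β)) ^ A.card * Real.exp (-β) ^ ((monoEdges σ).card - A.card)
        * ((q : ℝ) ^ compCount A)⁻¹

/-- The isolated-vertices dynamics `I_SW`: add each monochromatic edge independently with
probability `p = 1 − e^{−β}`, then resample uniformly the spins of the isolated vertices. -/
noncomputable def ISWmat {d : ℕ} (q : ℕ) (β : ℝ) (V : Finset (Vtx d)) :
    Matrix (Conf V q) (Conf V q) ℝ :=
  Matrix.of fun σ σ' =>
    ∑ A ∈ (monoEdges σ).powerset,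
      (1 - Real.exp (-β)) ^ A.card * Real.exp (-β) ^ ((monoEdges σ).card - A.card) *
        (if ∀ v : {x // x ∈ V}, v ∉ isoVerts A → σ' v = σ v
         then ((q : ℝ) ^ (isoVerts A).card)⁻¹ else 0)

/-- Variance w.r.t. `μ`. -/
noncomputable def varMu {Ω : Type*} [Fintype Ω] (μ f : Ω → ℝ) : ℝ :=
  ∑ x, (f x - ∑ y, f y * μ y) ^ 2 * μ x

/-- Inner product in `L²(μ)`. -/
noncomputable def innerMu {Ω : Type*} [Fintype Ω] (μ f g : Ω → ℝ) : ℝ :=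
  ∑ x, f x * g x * μ x

/-- Dirichlet form `⟨f, (I − P) f⟩_μ`. -/
noncomputable def dirichletForm {Ω : Type*} [Fintype Ω]
    (μ : Ω → ℝ) (P : Matrix Ω Ω ℝ) (f : Ω → ℝ) : ℝ :=
  ∑ x, f x * (f x - P.mulVec f x) * μ x

/-- Spectral gap of a reversible positive semidefinite chain, via the variational
characterization `λ(P) = min { ⟨f,(I−P)f⟩_μ / Var_μ(f) : Var_μ(f) ≠ 0 }`. -/
noncomputable def gapD {Ω : Type*} [Fintype Ω] (μ : Ω → ℝ) (P : Matrix Ω Ω ℝ) : ℝ :=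
  sInf {r : ℝ | ∃ f : Ω → ℝ, varMu μ f ≠ 0 ∧ r = dirichletForm μ P f / varMu μ f}

/-- The tiling of `V` with offset `x ∈ {0,…,L+2}^d`: the union over `h ∈ ℤ^d` of the
`d`-dimensional cubes of side length `L−1` (volume `L^d`) centered at `x + h(L+3)`,
intersected with `V`. -/
noncomputable def tile {d : ℕ} (V : Finset (Vtx d)) (L : ℕ) (x : Fin d → Fin (L + 3)) :
    Finset (Vtx d) :=
  V.filter fun y => ∃ h : Fin d → ℤ,
    ∀ i, |y i - (x i : ℤ) - h i * ((L : ℤ) + 3)| ≤ ((L : ℤ) - 1) / 2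

/-- The isolated-vertices tiled dynamics `I_D`: add each monochromatic edge independently
with probability `p`, pick a tiling `B_k` uniformly at random among the `(L+3)^d` tilings,
and resample uniformly the spins of the isolated vertices lying in `B_k`. -/
noncomputable def IDmat {d : ℕ} (q : ℕ) (β : ℝ) (V : Finset (Vtx d)) (L : ℕ) :
    Matrix (Conf V q) (Conf V q) ℝ :=
  Matrix.of fun σ σ' =>
    (((L : ℝ) + 3) ^ d)⁻¹ * ∑ x : Fin d → Fin (L + 3), ∑ A ∈ (monoEdges σ).powerset,
      (1 - Real.exp (-β)) ^ A.card * Real.exp (-β) ^ ((monoEdges σ).card - A.card) *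
        (if ∀ v : {y // y ∈ V}, ¬(v ∈ isoVerts A ∧ v.1 ∈ tile V L x) → σ' v = σ v
         then ((q : ℝ) ^ ((isoVerts A).filter fun v => v.1 ∈ tile V L x).card)⁻¹ else 0)

/-- Glue a configuration on `Bk` with a configuration on `V ∖ Bk` into a configuration
on `V`. -/
noncomputable def glue {d q : ℕ} (V Bk : Finset (Vtx d))
    (σ : {x // x ∈ Bk} → Fin q) (τ : {x // x ∈ V \ Bk} → Fin q) : Conf V q :=
  fun v => if h : v.1 ∈ Bk then σ ⟨v.1, h⟩ else τ ⟨v.1, Finset.mem_sdiff.mpr ⟨v.2, h⟩⟩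

/-- The conditional Potts measure `π(·|τ)` on configurations of `Bk`, given the
configuration `τ` on `V ∖ Bk`. -/
noncomputable def pottsCond {d : ℕ} (q : ℕ) (β : ℝ) (V Bk : Finset (Vtx d))
    (τ : {x // x ∈ V \ Bk} → Fin q) : ({x // x ∈ Bk} → Fin q) → ℝ :=
  fun σ => potts q β V (glue V Bk σ τ) /
    ∑ σ' : {x // x ∈ Bk} → Fin q, potts q β V (glue V Bk σ' τ)

/-- The conditional isolated-vertices tiled dynamics `P_k^τ` acting on configurations of
`Bk`, with `τ` the fixed configuration on `V ∖ Bk`: add each edge monochromatic in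
`σ ∪ τ` independently with probability `p`, then resample uniformly each resulting
isolated vertex lying in `Bk`. -/
noncomputable def condIso {d : ℕ} (q : ℕ) (β : ℝ) (V Bk : Finset (Vtx d))
    (τ : {x // x ∈ V \ Bk} → Fin q) :
    Matrix ({x // x ∈ Bk} → Fin q) ({x // x ∈ Bk} → Fin q) ℝ :=
  Matrix.of fun σ σ' =>
    ∑ A ∈ (monoEdges (glue V Bk σ τ)).powerset,
      (1 - Real.exp (-β)) ^ A.card
        * Real.exp (-β) ^ ((monoEdges (glue V Bk σ τ)).card - A.card) *
        (if ∀ w : {x // x ∈ Bk}, (¬∃ v ∈ isoVerts A, v.1 = w.1) → σ' w = σ w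
         then ((q : ℝ) ^ ((isoVerts A).filter fun v => v.1 ∈ Bk).card)⁻¹ else 0)


lemma latAdj_irrefl {d : ℕ} (u : Vtx d) : ¬ latAdj u u := by
  simp [latAdj, latDist]

lemma latAdj_symm {d : ℕ} {u v : Vtx d} (h : latAdj u v) : latAdj v u := by
  unfold latAdj latDist at *
  rw [← h]
  exact Finset.sum_congr rfl fun i _ => by rw [← Int.natAbs_neg, neg_sub]

lemma mem_monoEdges {d q : ℕ} {V : Finset (Vtx d)} {σ : Conf V q}
    {e : Sym2 {x // x ∈ V}} :
    e ∈ monoEdges σ ↔ ∃ u v : {x // x ∈ V}, e = s(u, v) ∧ latAdj u.1 v.1 ∧ σ u = σ v := by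
  simp [monoEdges]

lemma mono_pair_count {d q : ℕ} {V : Finset (Vtx d)} (σ : Conf V q) :
    (∑ u : {x // x ∈ V}, ∑ v : {x // x ∈ V},
      if latAdj u.1 v.1 ∧ σ u = σ v then (1 : ℝ) else 0)
      = 2 * ((monoEdges σ).card : ℝ) := by
  classical
  have h1 : (∑ u : {x // x ∈ V}, ∑ v : {x // x ∈ V},
      if latAdj u.1 v.1 ∧ σ u = σ v then (1 : ℝ) else 0)
      = ((Finset.univ.filter fun p : {x // x ∈ V} × {x // x ∈ V} =>
          latAdj p.1.1 p.2.1 ∧ σ p.1 = σ p.2).card : ℝ) := by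
    rw [← Finset.sum_product', Finset.univ_product_univ, Finset.sum_boole]
  rw [h1]
  have h2 : (Finset.univ.filter fun p : {x // x ∈ V} × {x // x ∈ V} =>
        latAdj p.1.1 p.2.1 ∧ σ p.1 = σ p.2).card = 2 * (monoEdges σ).card := by
    rw [Finset.card_eq_sum_card_fiberwise
      (f := fun p : {x // x ∈ V} × {x // x ∈ V} => s(p.1, p.2)) (t := monoEdges σ)
      (fun p hp => by
        simp only [Finset.mem_coe, Finset.mem_filter, Finset.mem_univ, true_and] at hp
        exact mem_monoEdges.mpr ⟨p.1, p.2, rfl, hp.1, hp.2⟩)]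
    rw [Finset.sum_congr rfl (fun e he => ?_), Finset.sum_const, smul_eq_mul, mul_comm]
    obtain ⟨u, v, rfl, hadj, hmono⟩ := mem_monoEdges.mp he
    have hne : u ≠ v := fun h => latAdj_irrefl v.1 (by rw [h] at hadj; exact hadj)
    have hset : ((Finset.univ.filter fun p : {x // x ∈ V} × {x // x ∈ V} =>
        latAdj p.1.1 p.2.1 ∧ σ p.1 = σ p.2).filter fun p => s(p.1, p.2) = s(u, v))
        = {(u, v), (v, u)} := by
      ext p
      simp only [Finset.mem_filter, Finset.mem_univ, true_and, Finset.mem_insert,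
        Finset.mem_singleton]
      constructor
      · rintro ⟨-, hpe⟩
        rcases Sym2.eq_iff.mp hpe with ⟨h1, h2⟩ | ⟨h1, h2⟩
        · left; exact Prod.ext h1 h2
        · right; exact Prod.ext h1 h2
      · rintro (rfl | rfl)
        · exact ⟨⟨hadj, hmono⟩, rfl⟩
        · exact ⟨⟨latAdj_symm hadj, hmono.symm⟩, Sym2.eq_swap⟩
    rw [hset, Finset.card_insert_of_notMem (by simp [Prod.ext_iff, hne]),
      Finset.card_singleton]
  rw [h2]
  push_cast
  ring

lemma pottsWeight_eq {d q : ℕ} {V : Finset (Vtx d)} (β : ℝ) (σ : Conf V q) :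
    pottsWeight q β σ = Real.exp (β * (monoEdges σ).card) := by
  unfold pottsWeight
  rw [mono_pair_count]
  ring_nf

lemma mem_isoVerts {d : ℕ} {V : Finset (Vtx d)} {A : Finset (Sym2 {x // x ∈ V})}
    {v : {x // x ∈ V}} : v ∈ isoVerts A ↔ ∀ e ∈ A, v ∉ e := by
  simp [isoVerts]

lemma subset_mono_of_agree {d q : ℕ} {V : Finset (Vtx d)} {σ σ' : Conf V q}
    {A : Finset (Sym2 {x // x ∈ V})} (hA : A ⊆ monoEdges σ)
    (h : ∀ v, v ∉ isoVerts A → σ' v = σ v) : A ⊆ monoEdges σ' := by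
  intro e he
  obtain ⟨u, v, rfl, hadj, hmono⟩ := mem_monoEdges.mp (hA he)
  have hu : u ∉ isoVerts A := fun hc => (mem_isoVerts.mp hc) _ he (Sym2.mem_mk_left u v)
  have hv : v ∉ isoVerts A := fun hc => (mem_isoVerts.mp hc) _ he (Sym2.mem_mk_right u v)
  exact mem_monoEdges.mpr ⟨u, v, rfl, hadj, by rw [h u hu, h v hv, hmono]⟩

lemma powerset_eq_filter {α : Type*} [Fintype α] [DecidableEq α] (s : Finset α) :
    s.powerset = Finset.univ.filter fun A => A ⊆ s := by
  ext A; simp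
lemma quad_nonneg {Ω B : Type*} [Fintype Ω] [Fintype B] (r : Ω → B) (g : Ω → ℝ) :
    0 ≤ ∑ σ : Ω, ∑ σ' : Ω, (if r σ = r σ' then g σ * g σ' else 0) := by
  have key : ∀ σ σ' : Ω, (if r σ = r σ' then g σ * g σ' else 0)
      = ∑ ρ : B, (if r σ = ρ then g σ else 0) * (if r σ' = ρ then g σ' else 0) := by
    intro σ σ'
    rw [Finset.sum_eq_single (r σ)]
    · by_cases h : r σ = r σ'
      · simp [h]
      · rw [if_neg h, if_pos rfl, if_neg (fun hh : r σ' = r σ => h hh.symm), mul_zero]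
    · intro b _ hb
      rw [if_neg (fun hh : r σ = b => hb hh.symm), zero_mul]
    · intro h; exact absurd (Finset.mem_univ _) h
  simp_rw [key]
  have step1 : ∀ σ : Ω,
      (∑ σ' : Ω, ∑ ρ : B, (if r σ = ρ then g σ else 0) * (if r σ' = ρ then g σ' else 0))
      = ∑ ρ : B, (if r σ = ρ then g σ else 0) * ∑ σ' : Ω, (if r σ' = ρ then g σ' else 0) := by
    intro σ
    rw [Finset.sum_comm]
    exact Finset.sum_congr rfl fun ρ _ => by rw [← Finset.mul_sum]
  simp_rw [step1]
  rw [Finset.sum_comm]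
  refine Finset.sum_nonneg fun ρ _ => ?_
  rw [← Finset.sum_mul]
  exact mul_self_nonneg _

lemma sum_rotate {α β γ : Type*} [Fintype α] [Fintype β] [Fintype γ] (F : α → β → γ → ℝ) :
    ∑ a : α, ∑ b : β, ∑ c : γ, F a b c = ∑ c : γ, ∑ a : α, ∑ b : β, F a b c := by
  calc ∑ a : α, ∑ b : β, ∑ c : γ, F a b c
      = ∑ a : α, ∑ c : γ, ∑ b : β, F a b c :=
        Finset.sum_congr rfl fun a _ => Finset.sum_comm ..
    _ = ∑ c : γ, ∑ a : α, ∑ b : β, F a b c := Finset.sum_comm ..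

lemma rev_psd {Ω : Type*} [Fintype Ω] {J : Type*} [Fintype J]
    (μ : Ω → ℝ) (M : Matrix Ω Ω ℝ)
    (B : J → Type) [∀ j, Fintype (B j)]
    (r : ∀ j, Ω → B j) (Good : J → Ω → Prop) (w : J → ℝ)
    (hw : ∀ j, 0 ≤ w j)
    (hG : ∀ j σ σ', r j σ = r j σ' → Good j σ → Good j σ')
    (hM : ∀ σ σ', μ σ * M σ σ' =
      ∑ j : J, if Good j σ ∧ r j σ = r j σ' then w j else 0) :
    (∀ σ σ', μ σ * M σ σ' = μ σ' * M σ' σ) ∧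
    (∀ f : Ω → ℝ, 0 ≤ innerMu μ f (M.mulVec f)) := by
  constructor
  · intro σ σ'
    rw [hM, hM]
    refine Finset.sum_congr rfl fun j _ => ?_
    have h : (Good j σ ∧ r j σ = r j σ') ↔ (Good j σ' ∧ r j σ' = r j σ) :=
      ⟨fun ⟨h1, h2⟩ => ⟨hG j σ σ' h2 h1, h2.symm⟩,
       fun ⟨h1, h2⟩ => ⟨hG j σ' σ h2 h1, h2.symm⟩⟩
    simp_rw [h]
  · intro f
    have expand : innerMu μ f (M.mulVec f)
        = ∑ σ : Ω, ∑ σ' : Ω, (μ σ * M σ σ') * (f σ * f σ') := by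
      unfold innerMu Matrix.mulVec dotProduct
      refine Finset.sum_congr rfl fun σ _ => ?_
      rw [Finset.mul_sum, Finset.sum_mul]
      exact Finset.sum_congr rfl fun σ' _ => by ring
    rw [expand]
    simp_rw [hM, Finset.sum_mul]
    rw [sum_rotate]
    refine Finset.sum_nonneg fun j _ => ?_
    have hterm : ∀ σ σ' : Ω, (if Good j σ ∧ r j σ = r j σ' then w j else 0) * (f σ * f σ')
        = w j * (if r j σ = r j σ'
            then (if Good j σ then f σ else 0) * (if Good j σ' then f σ' else 0) else 0) := by
      intro σ σ'
      by_cases hr : r j σ = r j σ'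
      · by_cases hg : Good j σ
        · rw [if_pos ⟨hg, hr⟩, if_pos hr, if_pos hg, if_pos (hG j σ σ' hr hg)]
        · rw [if_neg (show ¬(Good j σ ∧ r j σ = r j σ') from fun h => hg h.1), if_pos hr,
            if_neg hg, zero_mul, zero_mul, mul_zero]
      · rw [if_neg (show ¬(Good j σ ∧ r j σ = r j σ') from fun h => hr h.2), if_neg hr,
          zero_mul, mul_zero]
    simp_rw [hterm, ← Finset.mul_sum]
    exact mul_nonneg (hw j) (quad_nonneg (r j) (fun σ => if Good j σ then f σ else 0))

lemma exp_core (β : ℝ) {a m : ℕ} (h : a ≤ m) :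
    Real.exp (β * m) * ((1 - Real.exp (-β)) ^ a * Real.exp (-β) ^ (m - a))
      = (Real.exp β - 1) ^ a := by
  have h1 : Real.exp (-β) ^ (m - a) = Real.exp (((m - a : ℕ) : ℝ) * (-β)) := by
    rw [Real.exp_nat_mul]
  have hc : ((m - a : ℕ) : ℝ) = (m : ℝ) - a := by push_cast [h]; ring
  rw [h1, hc, mul_comm ((1 - Real.exp (-β)) ^ a), ← mul_assoc, ← Real.exp_add,
    show β * m + ((m : ℝ) - a) * (-β) = β * a by ring,
    show Real.exp (β * a) = Real.exp β ^ a by rw [mul_comm, Real.exp_nat_mul],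
    ← mul_pow]
  congr 1
  rw [Real.exp_neg]
  field_simp

lemma ISW_props (d q : ℕ) (β : ℝ) (hβ : 0 < β) (V : Finset (Vtx d)) :
    (∀ σ σ', potts q β V σ * ISWmat q β V σ σ' = potts q β V σ' * ISWmat q β V σ' σ) ∧
    (∀ f : Conf V q → ℝ, 0 ≤ innerMu (potts q β V) f ((ISWmat q β V).mulVec f)) := by
  classical
  have hexp : (0:ℝ) ≤ Real.exp β - 1 := by nlinarith [Real.add_one_le_exp β]
  refine rev_psd (potts q β V) (ISWmat q β V)
    (B := fun A : Finset (Sym2 {x // x ∈ V}) =>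
      ({v : {x // x ∈ V} // v ∉ isoVerts A} → Fin q))
    (r := fun A σ w => σ w.1)
    (Good := fun A σ => A ⊆ monoEdges σ)
    (w := fun A => (∑ σ'' : Conf V q, pottsWeight q β σ'')⁻¹ *
      ((Real.exp β - 1) ^ A.card * ((q : ℝ) ^ (isoVerts A).card)⁻¹))
    (fun A => ?_) (fun A σ σ' hr hg => ?_) (fun σ σ' => ?_)
  · exact mul_nonneg (inv_nonneg.mpr (Finset.sum_nonneg fun _ _ => (Real.exp_pos _).le))
      (mul_nonneg (pow_nonneg hexp _) (inv_nonneg.mpr (pow_nonneg (Nat.cast_nonneg q) _)))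
  · exact subset_mono_of_agree hg fun v hv => (congrFun hr ⟨v, hv⟩).symm
  · simp only [potts, ISWmat, Matrix.of_apply]
    rw [div_eq_mul_inv, pottsWeight_eq β σ, powerset_eq_filter, Finset.sum_filter,
      Finset.mul_sum]
    refine Finset.sum_congr rfl fun A _ => ?_
    by_cases hA : A ⊆ monoEdges σ
    · rw [if_pos hA]
      by_cases hag : ∀ v : {x // x ∈ V}, v ∉ isoVerts A → σ' v = σ v
      · rw [if_pos hag, if_pos ⟨hA, funext fun w => (hag w.1 w.2).symm⟩]
        have h := exp_core β (Finset.card_le_card hA)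
        linear_combination ((∑ σ'' : Conf V q, pottsWeight q β σ'')⁻¹ *
          ((q : ℝ) ^ (isoVerts A).card)⁻¹) * h
      · rw [if_neg hag,
          if_neg (show ¬(A ⊆ monoEdges σ ∧ _) from
            fun hc => hag fun v hv => (congrFun hc.2 ⟨v, hv⟩).symm),
          mul_zero, mul_zero]
    · rw [if_neg hA, if_neg (show ¬(A ⊆ monoEdges σ ∧ _) from fun hc => hA hc.1), mul_zero]

lemma ID_props (d q : ℕ) (β : ℝ) (hβ : 0 < β) (V : Finset (Vtx d)) (L : ℕ) :
    (∀ σ σ', potts q β V σ * IDmat q β V L σ σ' = potts q β V σ' * IDmat q β V L σ' σ) ∧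
    (∀ f : Conf V q → ℝ, 0 ≤ innerMu (potts q β V) f ((IDmat q β V L).mulVec f)) := by
  classical
  have hexp : (0:ℝ) ≤ Real.exp β - 1 := by nlinarith [Real.add_one_le_exp β]
  refine rev_psd (potts q β V) (IDmat q β V L)
    (B := fun j : (Fin d → Fin (L + 3)) × Finset (Sym2 {x // x ∈ V}) =>
      ({v : {x // x ∈ V} // ¬(v ∈ isoVerts j.2 ∧ v.1 ∈ tile V L j.1)} → Fin q))
    (r := fun j σ w => σ w.1)
    (Good := fun j σ => j.2 ⊆ monoEdges σ)
    (w := fun j => (∑ σ'' : Conf V q, pottsWeight q β σ'')⁻¹ *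
      ((((L : ℝ) + 3) ^ d)⁻¹ * ((Real.exp β - 1) ^ j.2.card *
        ((q : ℝ) ^ ((isoVerts j.2).filter fun v => v.1 ∈ tile V L j.1).card)⁻¹)))
    (fun j => ?_) (fun j σ σ' hr hg => ?_) (fun σ σ' => ?_)
  · refine mul_nonneg (inv_nonneg.mpr (Finset.sum_nonneg fun _ _ => (Real.exp_pos _).le))
      (mul_nonneg (inv_nonneg.mpr (pow_nonneg (by positivity) _))
        (mul_nonneg (pow_nonneg hexp _)
          (inv_nonneg.mpr (pow_nonneg (Nat.cast_nonneg q) _))))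
  · exact subset_mono_of_agree hg fun v hv =>
      (congrFun hr ⟨v, fun hc => hv hc.1⟩).symm
  · simp only [potts, IDmat, Matrix.of_apply]
    rw [div_eq_mul_inv, pottsWeight_eq β σ, Fintype.sum_prod_type]
    simp_rw [powerset_eq_filter, Finset.sum_filter, Finset.mul_sum]
    refine Finset.sum_congr rfl fun x _ => Finset.sum_congr rfl fun A _ => ?_
    by_cases hA : A ⊆ monoEdges σ
    · rw [if_pos hA]
      by_cases hag : ∀ v : {y // y ∈ V}, ¬(v ∈ isoVerts A ∧ v.1 ∈ tile V L x) → σ' v = σ v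
      · rw [if_pos hag, if_pos ⟨hA, funext fun w => (hag w.1 w.2).symm⟩]
        have h := exp_core β (Finset.card_le_card hA)
        linear_combination ((∑ σ'' : Conf V q, pottsWeight q β σ'')⁻¹ *
          ((((L : ℝ) + 3) ^ d)⁻¹ *
            ((q : ℝ) ^ ((isoVerts A).filter fun v => v.1 ∈ tile V L x).card)⁻¹)) * h
      · rw [if_neg hag,
          if_neg (show ¬(A ⊆ monoEdges σ ∧ _) from
            fun hc => hag fun v hv => (congrFun hc.2 ⟨v, hv⟩).symm),
          mul_zero, mul_zero, mul_zero]
    · rw [if_neg hA, if_neg (show ¬(A ⊆ monoEdges σ ∧ _) from fun hc => hA hc.1),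
        mul_zero, mul_zero]

lemma cond_props (d q : ℕ) (β : ℝ) (hβ : 0 < β) (V Bk : Finset (Vtx d))
    (τ : {x // x ∈ V \ Bk} → Fin q) :
    (∀ σ σ', pottsCond q β V Bk τ σ * condIso q β V Bk τ σ σ'
        = pottsCond q β V Bk τ σ' * condIso q β V Bk τ σ' σ) ∧
    (∀ f : ({x // x ∈ Bk} → Fin q) → ℝ,
      0 ≤ innerMu (pottsCond q β V Bk τ) f ((condIso q β V Bk τ).mulVec f)) := by
  classical
  have hexp : (0:ℝ) ≤ Real.exp β - 1 := by nlinarith [Real.add_one_le_exp β]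
  have hpotts : ∀ ρ : Conf V q, potts q β V ρ
      = pottsWeight q β ρ * (∑ σ''' : Conf V q, pottsWeight q β σ''')⁻¹ := fun ρ => by
    simp only [potts]; rw [div_eq_mul_inv]
  refine rev_psd (pottsCond q β V Bk τ) (condIso q β V Bk τ)
    (B := fun A : Finset (Sym2 {x // x ∈ V}) =>
      ({w : {x // x ∈ Bk} // ¬∃ v ∈ isoVerts A, v.1 = w.1} → Fin q))
    (r := fun A σ w => σ w.1)
    (Good := fun A σ => A ⊆ monoEdges (glue V Bk σ τ))
    (w := fun A => ((∑ σ''' : Conf V q, pottsWeight q β σ''')⁻¹ *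
        (∑ σ'' : {x // x ∈ Bk} → Fin q, potts q β V (glue V Bk σ'' τ))⁻¹) *
      ((Real.exp β - 1) ^ A.card *
        ((q : ℝ) ^ ((isoVerts A).filter fun v => v.1 ∈ Bk).card)⁻¹))
    (fun A => ?_) (fun A σ σ' hr hg => ?_) (fun σ σ' => ?_)
  · refine mul_nonneg
      (mul_nonneg (inv_nonneg.mpr (Finset.sum_nonneg fun _ _ => (Real.exp_pos _).le))
        (inv_nonneg.mpr (Finset.sum_nonneg fun ρ _ => ?_)))
      (mul_nonneg (pow_nonneg hexp _) (inv_nonneg.mpr (pow_nonneg (Nat.cast_nonneg q) _)))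
    rw [hpotts]
    exact mul_nonneg (Real.exp_pos _).le
      (inv_nonneg.mpr (Finset.sum_nonneg fun _ _ => (Real.exp_pos _).le))
  · refine subset_mono_of_agree hg fun v hv => ?_
    simp only [glue]
    by_cases hb : v.1 ∈ Bk
    · rw [dif_pos hb, dif_pos hb]
      have hnotex : ¬∃ u ∈ isoVerts A, u.1 = (⟨v.1, hb⟩ : {x // x ∈ Bk}).1 := by
        rintro ⟨u, hu, he⟩
        exact hv (by rwa [show u = v from Subtype.ext he] at hu)
      exact (congrFun hr ⟨⟨v.1, hb⟩, hnotex⟩).symm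
    · rw [dif_neg hb, dif_neg hb]
  · simp only [pottsCond, condIso, Matrix.of_apply]
    rw [div_eq_mul_inv, hpotts, pottsWeight_eq β (glue V Bk σ τ), powerset_eq_filter,
      Finset.sum_filter]
    simp_rw [Finset.mul_sum]
    refine Finset.sum_congr rfl fun A _ => ?_
    by_cases hA : A ⊆ monoEdges (glue V Bk σ τ)
    · rw [if_pos hA]
      by_cases hag : ∀ w : {x // x ∈ Bk}, (¬∃ v ∈ isoVerts A, v.1 = w.1) → σ' w = σ w
      · rw [if_pos hag, if_pos ⟨hA, funext fun w => (hag w.1 w.2).symm⟩]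
        have h := exp_core β (Finset.card_le_card hA)
        linear_combination (((∑ σ''' : Conf V q, pottsWeight q β σ''')⁻¹ *
          (∑ σ'' : {x // x ∈ Bk} → Fin q, potts q β V (glue V Bk σ'' τ))⁻¹) *
          ((q : ℝ) ^ ((isoVerts A).filter fun v => v.1 ∈ Bk).card)⁻¹) * h
      · rw [if_neg hag,
          if_neg (show ¬(A ⊆ monoEdges (glue V Bk σ τ) ∧ _) from
            fun hc => hag fun w hw => (congrFun hc.2 ⟨w, hw⟩).symm),
          mul_zero, mul_zero]
    · rw [if_neg hA,
        if_neg (show ¬(A ⊆ monoEdges (glue V Bk σ τ) ∧ _) from fun hc => hA hc.1),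
        mul_zero]

/-- (i) The isolated-vertices dynamics `I_SW` and the isolated-vertices tiled dynamics
`I_D` are reversible w.r.t. the Potts measure `π` and positive semidefinite in `L²(π)`;
(ii) for every tiling `B_k` and configuration `τ` on `V ∖ B_k`, the conditional
isolated-vertices tiled dynamics `P_k^τ` is reversible w.r.t. `π(·|τ)` and positive
semidefinite in `L²(π(·|τ))`. -/
theorem statement10 (d q : ℕ) (β : ℝ) (hq : 2 ≤ q) (hβ : 0 < β)
    (V : Finset (Vtx d)) (hV : IsCube V) (L : ℕ) (hL : Odd L) :
    (∀ σ σ', potts q β V σ * ISWmat q β V σ σ' = potts q β V σ' * ISWmat q β V σ' σ) ∧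
    (∀ f : Conf V q → ℝ, 0 ≤ innerMu (potts q β V) f ((ISWmat q β V).mulVec f)) ∧
    (∀ σ σ',
      potts q β V σ * IDmat q β V L σ σ' = potts q β V σ' * IDmat q β V L σ' σ) ∧
    (∀ f : Conf V q → ℝ, 0 ≤ innerMu (potts q β V) f ((IDmat q β V L).mulVec f)) ∧
    (∀ (x : Fin d → Fin (L + 3)) (τ : {y // y ∈ V \ tile V L x} → Fin q),
      (∀ σ σ', pottsCond q β V (tile V L x) τ σ * condIso q β V (tile V L x) τ σ σ'
          = pottsCond q β V (tile V L x) τ σ' * condIso q β V (tile V L x) τ σ' σ) ∧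
      (∀ f : ({y // y ∈ tile V L x} → Fin q) → ℝ,
        0 ≤ innerMu (pottsCond q β V (tile V L x) τ) f
          ((condIso q β V (tile V L x) τ).mulVec f))) := by
  exact ⟨(ISW_props d q β hβ V).1, (ISW_props d q β hβ V).2,
    (ID_props d q β hβ V L).1, (ID_props d q β hβ V L).2,
    fun x τ => cond_props d q β hβ V (tile V L x) τ⟩
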